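/- Let V and E be finite sets with maps t, h : E → V, let c : E → ℝ satisfy −1 < c(e) < 1 for every e ∈ E, and let νt, νh : E → ℝ satisfy, for every e ∈ E, νt(e) ≥ c(e)·νh(e) and νh(e) ≥ c(e)·νt(e). Suppose furthermore that for every vertex v ∈ V, Σ_{e : t e = v} νt(e) + Σ_{e : h e = v} νh(e) = 0. Then νt(e) = 0 and νh(e) = 0 for every e ∈ E. -/

import Mathlib

open Finset

/-- Nonexistence of nontrivial balanced data at the singular degree: if
`-1 < c(e) < 1`, `νt(e) ≥ c(e)·νh(e)`, `νh(e) ≥ c(e)·νt(e)` for every oriented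
edge `e`, and the balancing conditions
`∑_{t e = v} νt(e) + ∑_{h e = v} νh(e) = 0` hold at every vertex `v`,
then `νt ≡ 0` and `νh ≡ 0`. -/
theorem stmt_17 (V E : Type) [Fintype V] [Fintype E] [DecidableEq V]
    (t h : E → V) (c νt νh : E → ℝ)
    (hc : ∀ e, -1 < c e ∧ c e < 1)
    (h₁ : ∀ e, c e * νh e ≤ νt e)
    (h₂ : ∀ e, c e * νt e ≤ νh e)
    (hbal : ∀ v : V,
      (∑ e ∈ Finset.univ.filter (fun e => t e = v), νt e) +
        (∑ e ∈ Finset.univ.filter (fun e => h e = v), νh e) = 0) :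
    ∀ e, νt e = 0 ∧ νh e = 0 := by
  -- each νt e + νh e ≥ 0
  have hnn : ∀ e, 0 ≤ νt e + νh e := by
    intro e
    have key : c e * (νt e + νh e) ≤ νt e + νh e := by
      have := add_le_add (h₁ e) (h₂ e); nlinarith
    nlinarith [(hc e).2]
  -- total sum is zero
  have hsum : ∑ e : E, (νt e + νh e) = 0 := by
    have := Finset.sum_congr rfl (fun v (_ : v ∈ (Finset.univ : Finset V)) => hbal v)
    rw [Finset.sum_add_distrib] at this
    rw [Finset.sum_fiberwise (g := t) (f := νt), Finset.sum_fiberwise (g := h) (f := νh)] at this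
    rw [Finset.sum_add_distrib]; simpa using this
  have hzero : ∀ e : E, νt e + νh e = 0 := by
    intro e
    have := (Finset.sum_eq_zero_iff_of_nonneg
      (fun e _ => hnn e)).mp hsum e (Finset.mem_univ e)
    exact this
  intro e
  have hz := hzero e
  have hct := h₁ e
  have hch := h₂ e
  have h1 := (hc e).1
  constructor <;> nlinarith
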